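/- Let r ≥ 3, assume r² divides n and that a Steiner system S(2,r,r²) exists. Then there exists a linear r-uniform hypergraph H on an n-element vertex set with r·|E(H)| = (r+1)·n which contains no copy of P_4^r: there are no four distinct hyperedges e_1, e_2, e_3, e_4 of H with e_i ∩ e_{i+1} ≠ ∅ for i = 1, 2, 3 and e_i ∩ e_j = ∅ whenever |i−j| ≥ 2. -/
import Mathlib

section helpers
variable {r : ℕ} {E' : Finset (Finset (Fin (r ^ 2)))}

/-- Linearity: two distinct blocks meet in at most one point. -/
lemma steiner_linear
    (hst : ∀ u v : Fin (r ^ 2), u ≠ v → ∃! e, e ∈ E' ∧ u ∈ e ∧ v ∈ e)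
    {e f : Finset (Fin (r ^ 2))} (he : e ∈ E') (hf : f ∈ E') (hef : e ≠ f) :
    (e ∩ f).card ≤ 1 := by
  by_contra h
  push_neg at h
  obtain ⟨u, hu, v, hv, huv⟩ := Finset.one_lt_card.mp h
  simp only [Finset.mem_inter] at hu hv
  obtain ⟨g, -, hg⟩ := hst u v huv
  have h1 := hg e ⟨he, hu.1, hv.1⟩
  have h2 := hg f ⟨hf, hu.2, hv.2⟩
  exact hef (h1.trans h2.symm)

/-- Each point lies on exactly r+1 blocks. -/
lemma steiner_degree (hr : 2 ≤ r) (hcard : ∀ e ∈ E', e.card = r)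
    (hst : ∀ u v : Fin (r ^ 2), u ≠ v → ∃! e, e ∈ E' ∧ u ∈ e ∧ v ∈ e)
    (v : Fin (r ^ 2)) : (E'.filter (fun e => v ∈ e)).card = r + 1 := by
  have key : ((E'.filter (fun e => v ∈ e)).biUnion (fun e => e.erase v))
      = Finset.univ.erase v := by
    ext u
    simp only [Finset.mem_biUnion, Finset.mem_filter, Finset.mem_erase, Finset.mem_univ,
      and_true]
    constructor
    · rintro ⟨e, ⟨-, -⟩, hne, -⟩
      exact hne
    · intro huv
      obtain ⟨e, ⟨he, hue, hve⟩, -⟩ := hst u v huv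
      exact ⟨e, ⟨he, hve⟩, huv, hue⟩
  have hdisj : ∀ e ∈ E'.filter (fun e => v ∈ e), ∀ f ∈ E'.filter (fun e => v ∈ e),
      e ≠ f → Disjoint (e.erase v) (f.erase v) := by
    intro e he f hf hef
    simp only [Finset.mem_filter] at he hf
    rw [Finset.disjoint_left]
    intro u hue huf
    rw [Finset.mem_erase] at hue huf
    obtain ⟨g, -, hg⟩ := hst u v hue.1
    exact hef ((hg e ⟨he.1, hue.2, he.2⟩).trans (hg f ⟨hf.1, huf.2, hf.2⟩).symm)
  have hcb := Finset.card_biUnion hdisj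
  rw [key] at hcb
  have h1 : (Finset.univ.erase v).card = r ^ 2 - 1 := by
    rw [Finset.card_erase_of_mem (Finset.mem_univ v)]
    simp
  have h2 : ∀ e ∈ E'.filter (fun e => v ∈ e), (e.erase v).card = r - 1 := by
    intro e he
    simp only [Finset.mem_filter] at he
    rw [Finset.card_erase_of_mem he.2, hcard e he.1]
  rw [h1, Finset.sum_congr rfl h2, Finset.sum_const, smul_eq_mul] at hcb
  obtain ⟨k, rfl⟩ : ∃ k, r = k + 1 := ⟨r - 1, by omega⟩
  simp only [Nat.add_sub_cancel] at hcb
  have hid : (k + 2) * k + 1 = (k + 1) ^ 2 := by ring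
  have hmul : (E'.filter (fun e => v ∈ e)).card * k = (k + 2) * k := by omega
  have := Nat.eq_of_mul_eq_mul_right (show 0 < k by omega) hmul
  omega

/-- Double counting: r * |E'| = r² * (r+1). -/
lemma steiner_count (hr : 2 ≤ r) (hcard : ∀ e ∈ E', e.card = r)
    (hst : ∀ u v : Fin (r ^ 2), u ≠ v → ∃! e, e ∈ E' ∧ u ∈ e ∧ v ∈ e) :
    E'.card * r = r ^ 2 * (r + 1) := by
  have h1 : ∑ v : Fin (r ^ 2), (E'.filter (fun e => v ∈ e)).card
      = ∑ e ∈ E', e.card := by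
    simp only [Finset.card_filter]
    rw [Finset.sum_comm]
    congr 1
    ext e
    simp [Finset.card_filter]
  rw [Finset.sum_congr rfl (fun v _ => steiner_degree hr hcard hst v),
    Finset.sum_congr rfl hcard, Finset.sum_const, Finset.sum_const, smul_eq_mul,
    smul_eq_mul, Finset.card_univ] at h1
  simpa using h1.symm

/-- Key geometric fact: no "cherry + parallel" configuration. -/
lemma steiner_key (hr : 3 ≤ r) (hcard : ∀ e ∈ E', e.card = r)
    (hst : ∀ u v : Fin (r ^ 2), u ≠ v → ∃! e, e ∈ E' ∧ u ∈ e ∧ v ∈ e)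
    {e₁ e₂ e₄ : Finset (Fin (r ^ 2))} (h1 : e₁ ∈ E') (h2 : e₂ ∈ E') (h4 : e₄ ∈ E')
    (h12 : e₁ ≠ e₂) (n12 : (e₁ ∩ e₂).Nonempty)
    (z14 : e₁ ∩ e₄ = ∅) (z24 : e₂ ∩ e₄ = ∅) : False := by
  classical
  obtain ⟨v, hv⟩ := n12
  rw [Finset.mem_inter] at hv
  set T := E'.filter (fun e => v ∈ e) with hT
  have hTcard : T.card = r + 1 := steiner_degree (by omega) hcard hst v
  have he1T : e₁ ∈ T := Finset.mem_filter.mpr ⟨h1, hv.1⟩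
  have hTe : (T.erase e₁).card = r := by
    rw [Finset.card_erase_of_mem he1T, hTcard]
    omega
  -- f u = the block through v and u
  set f : Fin (r ^ 2) → Finset (Fin (r ^ 2)) :=
    fun u => if h : v = u then ∅ else (hst v u h).choose with hf
  have hvnot4 : ∀ u ∈ e₄, v ≠ u := by
    intro u hu hvu
    have : v ∈ e₁ ∩ e₄ := Finset.mem_inter.mpr ⟨hv.1, hvu ▸ hu⟩
    rw [z14] at this; exact absurd this (Finset.notMem_empty v)
  have hfspec : ∀ u ∈ e₄, f u ∈ E' ∧ v ∈ f u ∧ u ∈ f u := by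
    intro u hu
    have h := hvnot4 u hu
    simp only [hf, dif_neg h]
    exact (hst v u h).choose_spec.1
  have hmaps : ∀ u ∈ e₄, f u ∈ T.erase e₁ := by
    intro u hu
    obtain ⟨hfE, hvf, huf⟩ := hfspec u hu
    refine Finset.mem_erase.mpr ⟨?_, Finset.mem_filter.mpr ⟨hfE, hvf⟩⟩
    intro hfe
    have : u ∈ e₁ ∩ e₄ := Finset.mem_inter.mpr ⟨hfe ▸ huf, hu⟩
    rw [z14] at this; exact absurd this (Finset.notMem_empty u)
  have hinj : Set.InjOn f e₄ := by
    intro u hu u' hu' hfeq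
    simp only [Finset.coe_mem, Finset.mem_coe] at hu hu'
    obtain ⟨hfE, hvf, huf⟩ := hfspec u hu
    obtain ⟨hfE', hvf', huf'⟩ := hfspec u' hu'
    by_contra hne
    have hfne4 : f u ≠ e₄ := by
      intro heq
      have : v ∈ e₁ ∩ e₄ := Finset.mem_inter.mpr ⟨hv.1, heq ▸ hvf⟩
      rw [z14] at this; exact absurd this (Finset.notMem_empty v)
    have hlin := steiner_linear hst hfE h4 hfne4
    have : 1 < (f u ∩ e₄).card := by
      refine Finset.one_lt_card.mpr ⟨u, ?_, u', ?_, hne⟩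
      · exact Finset.mem_inter.mpr ⟨huf, hu⟩
      · exact Finset.mem_inter.mpr ⟨hfeq ▸ huf', hu'⟩
    omega
  have himg : e₄.image f = T.erase e₁ := by
    apply Finset.eq_of_subset_of_card_le
    · intro g hg
      obtain ⟨u, hu, rfl⟩ := Finset.mem_image.mp hg
      exact hmaps u hu
    · rw [hTe, Finset.card_image_of_injOn hinj, hcard e₄ h4]
  have he2 : e₂ ∈ e₄.image f := by
    rw [himg]
    exact Finset.mem_erase.mpr ⟨h12.symm, Finset.mem_filter.mpr ⟨h2, hv.2⟩⟩
  obtain ⟨u, hu, hfu⟩ := Finset.mem_image.mp he2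
  obtain ⟨-, -, huf⟩ := hfspec u hu
  have : u ∈ e₂ ∩ e₄ := Finset.mem_inter.mpr ⟨hfu ▸ huf, hu⟩
  rw [z24] at this; exact absurd this (Finset.notMem_empty u)

end helpers

/-- If r² divides n and a Steiner system S(2,r,r²) exists, then there is a
linear r-uniform hypergraph H on n vertices with r·|E(H)| = (r+1)·n containing no copy
of the linear path P_4^r. -/
theorem stmt_17 (r n : ℕ) (hr : 3 ≤ r) (hdvd : r ^ 2 ∣ n)
    (hsteiner : ∃ E' : Finset (Finset (Fin (r ^ 2))),
      (∀ e ∈ E', e.card = r) ∧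
      (∀ u v : Fin (r ^ 2), u ≠ v → ∃! e, e ∈ E' ∧ u ∈ e ∧ v ∈ e)) :
    ∃ E : Finset (Finset (Fin n)),
      (∀ e ∈ E, e.card = r) ∧
      (∀ e ∈ E, ∀ f ∈ E, e ≠ f → (e ∩ f).card ≤ 1) ∧
      r * E.card = (r + 1) * n ∧
      ¬ ∃ e₁ ∈ E, ∃ e₂ ∈ E, ∃ e₃ ∈ E, ∃ e₄ ∈ E,
        e₁ ≠ e₂ ∧ e₁ ≠ e₃ ∧ e₁ ≠ e₄ ∧ e₂ ≠ e₃ ∧ e₂ ≠ e₄ ∧ e₃ ≠ e₄ ∧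
        (e₁ ∩ e₂).Nonempty ∧ (e₂ ∩ e₃).Nonempty ∧ (e₃ ∩ e₄).Nonempty ∧
        e₁ ∩ e₃ = ∅ ∧ e₁ ∩ e₄ = ∅ ∧ e₂ ∩ e₄ = ∅ := by
  classical
  obtain ⟨E', hcard, hst⟩ := hsteiner
  set m := n / r ^ 2 with hm
  have hn : r ^ 2 * m = n := Nat.mul_div_cancel' hdvd
  set g : Fin (r ^ 2) × Fin m ≃ Fin n :=
    finProdFinEquiv.trans (finCongr hn) with hg
  set ι : Fin m → Fin (r ^ 2) → Fin n := fun i v => g (v, i) with hι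
  have hιinj : ∀ i, Function.Injective (ι i) := by
    intro i v v' h
    have := g.injective h
    exact (Prod.ext_iff.mp this).1
  have hιij : ∀ i j v v', ι i v = ι j v' → i = j := by
    intro i j v v' h
    exact (Prod.ext_iff.mp (g.injective h)).2
  set E : Finset (Finset (Fin n)) :=
    (E' ×ˢ (Finset.univ : Finset (Fin m))).image
      (fun p => p.1.image (ι p.2)) with hE
  have hmem : ∀ e, e ∈ E ↔ ∃ a ∈ E', ∃ i : Fin m, e = a.image (ι i) := by
    intro e
    simp only [hE, Finset.mem_image, Finset.mem_product, Finset.mem_univ, and_true]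
    constructor
    · rintro ⟨⟨a, i⟩, ha, rfl⟩
      exact ⟨a, ha, i, rfl⟩
    · rintro ⟨a, ha, i, rfl⟩
      exact ⟨⟨a, i⟩, ha, rfl⟩
  -- intersections across different copies are empty
  have hcross : ∀ (a b : Finset (Fin (r ^ 2))) (i j : Fin m), i ≠ j →
      a.image (ι i) ∩ b.image (ι j) = ∅ := by
    intro a b i j hij
    rw [Finset.eq_empty_iff_forall_notMem]
    intro x hx
    rw [Finset.mem_inter, Finset.mem_image, Finset.mem_image] at hx
    obtain ⟨⟨v, -, hv⟩, ⟨u, -, hu⟩⟩ := hx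
    exact hij (hιij i j v u (hv.trans hu.symm))
  have hsame : ∀ (a b : Finset (Fin (r ^ 2))) (i : Fin m),
      a.image (ι i) ∩ b.image (ι i) = (a ∩ b).image (ι i) := by
    intro a b i
    exact (Finset.image_inter a b (hιinj i)).symm
  refine ⟨E, ?_, ?_, ?_, ?_⟩
  · intro e he
    obtain ⟨a, ha, i, rfl⟩ := (hmem e).mp he
    rw [Finset.card_image_of_injective _ (hιinj i)]
    exact hcard a ha
  · intro e he f hf hef
    obtain ⟨a, ha, i, rfl⟩ := (hmem e).mp he
    obtain ⟨b, hb, j, rfl⟩ := (hmem f).mp hf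
    rcases eq_or_ne i j with rfl | hij
    · rw [hsame, Finset.card_image_of_injective _ (hιinj i)]
      have hab : a ≠ b := fun h => hef (by rw [h])
      exact steiner_linear hst ha hb hab
    · rw [hcross a b i j hij, Finset.card_empty]; omega
  · -- edge count
    have hinjE : Set.InjOn (fun p : Finset (Fin (r ^ 2)) × Fin m => p.1.image (ι p.2))
        ((E' ×ˢ (Finset.univ : Finset (Fin m)) : Finset _) : Set _) := by
      rintro ⟨a, i⟩ ha ⟨b, j⟩ hb h
      dsimp only at h
      simp only [Finset.mem_coe, Finset.mem_product] at ha hb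
      have hane : a.Nonempty := by
        rw [← Finset.card_pos, hcard a ha.1]; omega
      obtain ⟨v, hv⟩ := hane
      have hvimg : ι i v ∈ b.image (ι j) := by
        rw [← h]; exact Finset.mem_image_of_mem _ hv
      obtain ⟨u, -, hu⟩ := Finset.mem_image.mp hvimg
      have hij : i = j := (hιij j i u v hu).symm
      subst hij
      have hab : a = b := Finset.image_injective (hιinj i) h
      simp [hab]
    have hEc : E.card = E'.card * m := by
      rw [hE, Finset.card_image_of_injOn hinjE, Finset.card_product, Finset.card_univ,
        Fintype.card_fin]
    have hcount := steiner_count (by omega) hcard hst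
    calc r * E.card = E'.card * r * m := by rw [hEc]; ring
      _ = r ^ 2 * (r + 1) * m := by rw [hcount]
      _ = (r + 1) * n := by rw [← hn]; ring
  · rintro ⟨e₁, he₁, e₂, he₂, e₃, he₃, e₄, he₄, h12, h13, h14, h23, h24, h34,
      n12, n23, n34, z13, z14, z24⟩
    obtain ⟨a₁, ha₁, i₁, rfl⟩ := (hmem e₁).mp he₁
    obtain ⟨a₂, ha₂, i₂, rfl⟩ := (hmem e₂).mp he₂
    obtain ⟨a₃, ha₃, i₃, rfl⟩ := (hmem e₃).mp he₃
    obtain ⟨a₄, ha₄, i₄, rfl⟩ := (hmem e₄).mp he₄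
    have hi12 : i₁ = i₂ := by
      by_contra hij
      rw [hcross a₁ a₂ i₁ i₂ hij] at n12
      exact Finset.not_nonempty_empty n12
    have hi23 : i₂ = i₃ := by
      by_contra hij
      rw [hcross a₂ a₃ i₂ i₃ hij] at n23
      exact Finset.not_nonempty_empty n23
    have hi34 : i₃ = i₄ := by
      by_contra hij
      rw [hcross a₃ a₄ i₃ i₄ hij] at n34
      exact Finset.not_nonempty_empty n34
    subst hi12; subst hi23; subst hi34
    rw [hsame] at n12 z14 z24
    have ha12 : a₁ ≠ a₂ := fun h => h12 (by rw [h])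
    have hz14 : a₁ ∩ a₄ = ∅ := by
      by_contra h
      obtain ⟨x, hx⟩ := Finset.nonempty_iff_ne_empty.mpr h
      have : ι i₁ x ∈ (a₁ ∩ a₄).image (ι i₁) := Finset.mem_image_of_mem _ hx
      rw [z14] at this
      exact absurd this (Finset.notMem_empty _)
    have hz24 : a₂ ∩ a₄ = ∅ := by
      by_contra h
      obtain ⟨x, hx⟩ := Finset.nonempty_iff_ne_empty.mpr h
      have : ι i₁ x ∈ (a₂ ∩ a₄).image (ι i₁) := Finset.mem_image_of_mem _ hx
      rw [z24] at this
      exact absurd this (Finset.notMem_empty _)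
    have hn12 : (a₁ ∩ a₂).Nonempty := by
      obtain ⟨x, hx⟩ := n12
      obtain ⟨u, hu, -⟩ := Finset.mem_image.mp hx
      exact ⟨u, hu⟩
    exact steiner_key hr hcard hst ha₁ ha₂ ha₄ ha12 hn12 hz14 hz24
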